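/- Let φ₀(u,v) = cos(4πu/3) + cos(2π(1−u−√3 v)/3) + cos(2π(1+u−√3 v)/3). The only critical points of φ₀ in the rectangle [−5/8, 5/8] × [−√3/3, √3/2] are the points A = (−1/2, −√3/6), B = (1/2, −√3/6), C = (0, √3/3), and M_C = (0, −√3/6). -/

import Mathlib

open Real

/-- Partial derivative in the first variable. -/
noncomputable def pdx (f : ℝ × ℝ → ℝ) (p : ℝ × ℝ) : ℝ :=
  deriv (fun x => f (x, p.2)) p.1

/-- Partial derivative in the second variable. -/
noncomputable def pdy (f : ℝ × ℝ → ℝ) (p : ℝ × ℝ) : ℝ :=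
  deriv (fun y => f (p.1, y)) p.2

/-- The symmetric second Neumann eigenfunction of the equilateral triangle `T₀`. -/
noncomputable def phi0 (p : ℝ × ℝ) : ℝ :=
  Real.cos (4 * π * p.1 / 3) + Real.cos (2 * π * (1 - p.1 - Real.sqrt 3 * p.2) / 3)
    + Real.cos (2 * π * (1 + p.1 - Real.sqrt 3 * p.2) / 3)

lemma hasDerivAt_cos_lin (c d x : ℝ) :
    HasDerivAt (fun t => Real.cos (c * t + d)) (-Real.sin (c * x + d) * c) x := by
  have h : HasDerivAt (fun t : ℝ => c * t + d) c x := by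
    simpa using ((hasDerivAt_id x).const_mul c).add_const d
  exact (Real.hasDerivAt_cos (c * x + d)).comp x h

lemma pdx_eq (u v : ℝ) : pdx phi0 (u, v) =
    -(4 * π / 3) * (Real.sin (2 * π * u / 3) *
      (2 * Real.cos (2 * π * u / 3) + Real.cos (2 * π * (1 - Real.sqrt 3 * v) / 3))) := by
  have h1 := hasDerivAt_cos_lin (4 * π / 3) 0 u
  have h2 := hasDerivAt_cos_lin (-(2 * π / 3)) (2 * π * (1 - Real.sqrt 3 * v) / 3) u
  have h3 := hasDerivAt_cos_lin (2 * π / 3) (2 * π * (1 - Real.sqrt 3 * v) / 3) u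
  have heq : (fun x => phi0 (x, v)) = (fun x =>
      Real.cos (4 * π / 3 * x + 0)
      + Real.cos (-(2 * π / 3) * x + 2 * π * (1 - Real.sqrt 3 * v) / 3)
      + Real.cos (2 * π / 3 * x + 2 * π * (1 - Real.sqrt 3 * v) / 3)) := by
    funext x
    simp only [phi0]
    congr 2 <;> ring_nf
  have H := (h1.add h2).add h3
  simp only [Pi.add_def] at H
  rw [← heq] at H
  show deriv (fun x => phi0 (x, v)) u = _
  rw [H.deriv]
  rw [show 4 * π / 3 * u + 0 = 2 * (2 * π * u / 3) by ring,
      show -(2 * π / 3) * u + 2 * π * (1 - Real.sqrt 3 * v) / 3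
        = 2 * π * (1 - Real.sqrt 3 * v) / 3 - 2 * π * u / 3 by ring,
      show 2 * π / 3 * u + 2 * π * (1 - Real.sqrt 3 * v) / 3
        = 2 * π * (1 - Real.sqrt 3 * v) / 3 + 2 * π * u / 3 by ring,
      Real.sin_two_mul, Real.sin_sub, Real.sin_add]
  ring_nf

lemma pdy_eq (u v : ℝ) : pdy phi0 (u, v) =
    (4 * Real.sqrt 3 * π / 3) *
      (Real.sin (2 * π * (1 - Real.sqrt 3 * v) / 3) * Real.cos (2 * π * u / 3)) := by
  have h2 := hasDerivAt_cos_lin (-(2 * π * Real.sqrt 3 / 3)) (2 * π * (1 - u) / 3) v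
  have h3 := hasDerivAt_cos_lin (-(2 * π * Real.sqrt 3 / 3)) (2 * π * (1 + u) / 3) v
  have h1 : HasDerivAt (fun _ : ℝ => Real.cos (4 * π * u / 3)) 0 v := hasDerivAt_const v _
  have heq : (fun y => phi0 (u, y)) = (fun y =>
      Real.cos (4 * π * u / 3)
      + Real.cos (-(2 * π * Real.sqrt 3 / 3) * y + 2 * π * (1 - u) / 3)
      + Real.cos (-(2 * π * Real.sqrt 3 / 3) * y + 2 * π * (1 + u) / 3)) := by
    funext y
    simp only [phi0]
    congr 2 <;> ring_nf
  have H := (h1.add h2).add h3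
  simp only [Pi.add_def] at H
  rw [← heq] at H
  show deriv (fun y => phi0 (u, y)) v = _
  rw [H.deriv]
  rw [show -(2 * π * Real.sqrt 3 / 3) * v + 2 * π * (1 - u) / 3
        = 2 * π * (1 - Real.sqrt 3 * v) / 3 - 2 * π * u / 3 by ring,
      show -(2 * π * Real.sqrt 3 / 3) * v + 2 * π * (1 + u) / 3
        = 2 * π * (1 - Real.sqrt 3 * v) / 3 + 2 * π * u / 3 by ring,
      Real.sin_sub, Real.sin_add]
  ring_nf

lemma sqrt3_sq : Real.sqrt 3 * Real.sqrt 3 = 3 := Real.mul_self_sqrt (by norm_num)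

lemma sin_a_zero {u : ℝ} (hu1 : -(5:ℝ)/8 ≤ u) (hu2 : u ≤ 5/8)
    (h : Real.sin (2 * π * u / 3) = 0) : u = 0 := by
  have hπ := Real.pi_pos
  obtain ⟨n, hn⟩ := Real.sin_eq_zero_iff.mp h
  have hn0 : n = 0 := by
    by_contra hne
    rcases lt_or_gt_of_ne hne with h1 | h1
    · have hn1 : n ≤ -1 := by omega
      have : (n : ℝ) ≤ -1 := by exact_mod_cast hn1
      nlinarith
    · have : (1 : ℝ) ≤ (n : ℝ) := by exact_mod_cast h1
      nlinarith
  rw [hn0] at hn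
  have hz : (0:ℝ) = 2 * π * u / 3 := by push_cast at hn; linarith
  have hcc : π * (2 * u) = π * 0 := by linarith
  have := mul_left_cancel₀ Real.pi_ne_zero hcc
  linarith

set_option maxHeartbeats 1000000 in
lemma main_fwd {u v : ℝ} (hu1 : -(5:ℝ)/8 ≤ u) (hu2 : u ≤ 5/8)
    (hv1 : -(Real.sqrt 3 / 3) ≤ v) (hv2 : v ≤ Real.sqrt 3 / 2)
    (hx : Real.sin (2 * π * u / 3) *
      (2 * Real.cos (2 * π * u / 3) + Real.cos (2 * π * (1 - Real.sqrt 3 * v) / 3)) = 0)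
    (hy : Real.sin (2 * π * (1 - Real.sqrt 3 * v) / 3) * Real.cos (2 * π * u / 3) = 0) :
    (u = -(1/2) ∧ v = -(Real.sqrt 3 / 6)) ∨ (u = 1/2 ∧ v = -(Real.sqrt 3 / 6)) ∨
    (u = 0 ∧ v = Real.sqrt 3 / 3) ∨ (u = 0 ∧ v = -(Real.sqrt 3 / 6)) := by
  have hπ := Real.pi_pos
  have hπ0 := Real.pi_ne_zero
  have h3 := sqrt3_sq
  have hs3pos : (0:ℝ) < Real.sqrt 3 := by nlinarith
  -- cos a > 0
  have hca : 0 < Real.cos (2 * π * u / 3) := by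
    apply Real.cos_pos_of_mem_Ioo
    constructor <;> [nlinarith; nlinarith]
  -- sin b = 0
  have hsb : Real.sin (2 * π * (1 - Real.sqrt 3 * v) / 3) = 0 := by
    rcases mul_eq_zero.mp hy with h | h
    · exact h
    · exact absurd h hca.ne'
  -- bounds on √3 v
  have hsv1 : -(1:ℝ) ≤ Real.sqrt 3 * v := by nlinarith [mul_le_mul_of_nonneg_left hv1 hs3pos.le]
  have hsv2 : Real.sqrt 3 * v ≤ 3/2 := by nlinarith [mul_le_mul_of_nonneg_left hv2 hs3pos.le]
  -- b = 0 or b = π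
  obtain ⟨n, hn⟩ := Real.sin_eq_zero_iff.mp hsb
  have hn01 : n = 0 ∨ n = 1 := by
    have hb1 : -(π/3) ≤ (n:ℝ) * π := by rw [hn]; nlinarith
    have hb2 : (n:ℝ) * π ≤ 4*π/3 := by rw [hn]; nlinarith
    have h0 : (0:ℤ) ≤ n := by
      by_contra hc
      push_neg at hc
      have hc1 : n ≤ -1 := by omega
      have : (n:ℝ) ≤ -1 := by exact_mod_cast hc1
      nlinarith
    have h1 : n ≤ 1 := by
      by_contra hc
      push_neg at hc
      have : (2:ℝ) ≤ (n:ℝ) := by exact_mod_cast hc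
      nlinarith
    omega
  rcases hn01 with h0 | h1
  · -- b = 0, point C
    rw [h0] at hn; push_cast at hn
    have hB : 2 * π * (1 - Real.sqrt 3 * v) / 3 = 0 := by linarith
    have hv : Real.sqrt 3 * v = 1 := by
      have : π * (1 - Real.sqrt 3 * v) = π * 0 := by linarith
      have := mul_left_cancel₀ hπ0 this
      linarith
    have hveq : v = Real.sqrt 3 / 3 := by
      linear_combination (Real.sqrt 3 / 3) * hv - (v / 3) * h3
    have hcb : Real.cos (2 * π * (1 - Real.sqrt 3 * v) / 3) = 1 := by rw [hB]; simp
    rw [hcb] at hx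
    have hsa : Real.sin (2 * π * u / 3) = 0 := by
      rcases mul_eq_zero.mp hx with h | h
      · exact h
      · nlinarith
    exact Or.inr (Or.inr (Or.inl ⟨sin_a_zero hu1 hu2 hsa, hveq⟩))
  · -- b = π
    rw [h1] at hn; push_cast at hn
    have hB : 2 * π * (1 - Real.sqrt 3 * v) / 3 = π := by linarith
    have hv : Real.sqrt 3 * v = -(1/2) := by
      have : π * (2 * (1 - Real.sqrt 3 * v)) = π * 3 := by linarith
      have := mul_left_cancel₀ hπ0 this
      linarith
    have hveq : v = -(Real.sqrt 3 / 6) := by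
      linear_combination (Real.sqrt 3 / 3) * hv - (v / 3) * h3
    have hcb : Real.cos (2 * π * (1 - Real.sqrt 3 * v) / 3) = -1 := by
      rw [hB]; exact Real.cos_pi
    rw [hcb] at hx
    rcases mul_eq_zero.mp hx with h | h
    · exact Or.inr (Or.inr (Or.inr ⟨sin_a_zero hu1 hu2 h, hveq⟩))
    · -- cos a = 1/2
      have hcoshalf : Real.cos (2 * π * u / 3) = 1/2 := by linarith
      have hpi3 : Real.cos (π/3) = 1/2 := Real.cos_pi_div_three
      have hmem2 : (π/3) ∈ Set.Icc 0 π := Set.mem_Icc.mpr ⟨by positivity, by linarith⟩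
      rcases le_or_gt 0 u with hu0 | hu0
      · have hmem1 : (2 * π * u / 3) ∈ Set.Icc 0 π :=
          Set.mem_Icc.mpr ⟨by nlinarith, by nlinarith⟩
        have heq : 2 * π * u / 3 = π / 3 :=
          Real.injOn_cos hmem1 hmem2 (by rw [hcoshalf, hpi3])
        have hcc : π * (2 * u) = π * 1 := by linarith
        have := mul_left_cancel₀ hπ0 hcc
        exact Or.inr (Or.inl ⟨by linarith, hveq⟩)
      · have hmem1 : (-(2 * π * u / 3)) ∈ Set.Icc 0 π :=
          Set.mem_Icc.mpr ⟨by nlinarith, by nlinarith⟩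
        have heq : -(2 * π * u / 3) = π / 3 :=
          Real.injOn_cos hmem1 hmem2 (by rw [Real.cos_neg, hcoshalf, hpi3])
        have hcc : π * (2 * u) = π * (-1) := by linarith
        have := mul_left_cancel₀ hπ0 hcc
        exact Or.inl ⟨by linarith, hveq⟩


lemma crit_pt {u v : ℝ}
    (hx : Real.sin (2 * π * u / 3) *
      (2 * Real.cos (2 * π * u / 3) + Real.cos (2 * π * (1 - Real.sqrt 3 * v) / 3)) = 0)
    (hy : Real.sin (2 * π * (1 - Real.sqrt 3 * v) / 3) * Real.cos (2 * π * u / 3) = 0) :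
    pdx phi0 (u, v) = 0 ∧ pdy phi0 (u, v) = 0 := by
  rw [pdx_eq, pdy_eq, hx, hy]; simp

set_option maxHeartbeats 1000000 in
/-- The only critical points of `φ₀` in `[−5/8, 5/8] × [−√3/3, √3/2]` are
`A = (−1/2, −√3/6)`, `B = (1/2, −√3/6)`, `C = (0, √3/3)` and `M_C = (0, −√3/6)`. -/
theorem phi0_critical_points :
    ∀ p : ℝ × ℝ,
      p ∈ Set.Icc (-(5 : ℝ) / 8) (5 / 8) ×ˢ Set.Icc (-(Real.sqrt 3 / 3)) (Real.sqrt 3 / 2) →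
      ((pdx phi0 p = 0 ∧ pdy phi0 p = 0) ↔
        (p = (-(1 / 2), -(Real.sqrt 3 / 6)) ∨ p = (1 / 2, -(Real.sqrt 3 / 6)) ∨
         p = (0, Real.sqrt 3 / 3) ∨ p = (0, -(Real.sqrt 3 / 6)))) := by
  rintro ⟨u, v⟩ ⟨hu, hv⟩
  rw [Set.mem_Icc] at hu hv
  obtain ⟨hu1, hu2⟩ := hu
  obtain ⟨hv1, hv2⟩ := hv
  have h3 := sqrt3_sq
  have hπ := Real.pi_pos
  constructor
  · rintro ⟨hx, hy⟩
    rw [pdx_eq] at hx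
    rw [pdy_eq] at hy
    have hx' : Real.sin (2 * π * u / 3) *
        (2 * Real.cos (2 * π * u / 3) + Real.cos (2 * π * (1 - Real.sqrt 3 * v) / 3)) = 0 := by
      rcases mul_eq_zero.mp hx with h | h
      · exfalso; nlinarith
      · exact h
    have hy' : Real.sin (2 * π * (1 - Real.sqrt 3 * v) / 3) * Real.cos (2 * π * u / 3) = 0 := by
      have hs3 : (0:ℝ) < Real.sqrt 3 := by nlinarith
      rcases mul_eq_zero.mp hy with h | h
      · exfalso; nlinarith
      · exact h
    rcases main_fwd hu1 hu2 hv1 hv2 hx' hy' with ⟨h1, h2⟩ | ⟨h1, h2⟩ | ⟨h1, h2⟩ | ⟨h1, h2⟩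
    · exact Or.inl (Prod.ext h1 h2)
    · exact Or.inr (Or.inl (Prod.ext h1 h2))
    · exact Or.inr (Or.inr (Or.inl (Prod.ext h1 h2)))
    · exact Or.inr (Or.inr (Or.inr (Prod.ext h1 h2)))
  · intro h
    rcases h with h | h | h | h <;> obtain ⟨h1, h2⟩ := Prod.ext_iff.mp h <;>
      simp only at h1 h2
    -- point A : u = -(1/2), v = -(√3/6), b = π, a = -(π/3)
    · subst h1; subst h2
      apply crit_pt
      · rw [show 2 * π * (1 - Real.sqrt 3 * -(Real.sqrt 3 / 6)) / 3 = π by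
              linear_combination (π / 9) * h3,
            show 2 * π * (-(1/2) : ℝ) / 3 = -(π/3) by ring,
            Real.cos_pi, Real.cos_neg, Real.cos_pi_div_three]
        ring
      · rw [show 2 * π * (1 - Real.sqrt 3 * -(Real.sqrt 3 / 6)) / 3 = π by
              linear_combination (π / 9) * h3, Real.sin_pi]
        ring
    · subst h1; subst h2
      apply crit_pt
      · rw [show 2 * π * (1 - Real.sqrt 3 * -(Real.sqrt 3 / 6)) / 3 = π by
              linear_combination (π / 9) * h3,
            show 2 * π * ((1:ℝ)/2) / 3 = π/3 by ring,
            Real.cos_pi, Real.cos_pi_div_three]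
        ring
      · rw [show 2 * π * (1 - Real.sqrt 3 * -(Real.sqrt 3 / 6)) / 3 = π by
              linear_combination (π / 9) * h3, Real.sin_pi]
        ring
    · subst h1; subst h2
      apply crit_pt
      · rw [show 2 * π * (0:ℝ) / 3 = 0 by ring, Real.sin_zero]; ring
      · rw [show 2 * π * (1 - Real.sqrt 3 * (Real.sqrt 3 / 3)) / 3 = 0 by
              linear_combination -(2 * π / 9) * h3, Real.sin_zero]
        ring
    · subst h1; subst h2
      apply crit_pt
      · rw [show 2 * π * (0:ℝ) / 3 = 0 by ring, Real.sin_zero]; ring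
      · rw [show 2 * π * (1 - Real.sqrt 3 * -(Real.sqrt 3 / 6)) / 3 = π by
              linear_combination (π / 9) * h3, Real.sin_pi]
        ring
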